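/- For every n ≥ 3, the number of acyclic orientations of the wheel graph W_n equals 3^n − 3. -/
import Mathlib


/-- The wheel graph `W_n` on vertex set `{0, 1, …, n}`: the hub `0` is adjacent to every
rim vertex `1, …, n`, and two rim vertices are adjacent iff their labels are consecutive
modulo `n`. -/
def wheelGraph (n : ℕ) : SimpleGraph (Fin (n + 1)) :=
  SimpleGraph.fromRel (fun i j => i = 0 ∨ ((i.val : ZMod n) = (j.val : ZMod n) + 1))

/-- The set of spanning trees of a graph `G`, regarded as edge sets. -/
def spanningTreeSet {V : Type*} (G : SimpleGraph V) : Set (Set (Sym2 V)) :=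
  {F | F ⊆ G.edgeSet ∧ (SimpleGraph.fromEdgeSet F).IsTree}

/-- The set of acyclic orientations of a graph `G`: relations orienting each edge of `G`
in exactly one direction, whose transitive closure is irreflexive. -/
def acyclicOrientationSet {V : Type*} (G : SimpleGraph V) : Set (V → V → Prop) :=
  {o | (∀ a b, o a b → G.Adj a b) ∧ (∀ a b, G.Adj a b → (o a b ↔ ¬ o b a)) ∧
    (∀ a, ¬ Relation.TransGen o a a)}

set_option linter.unusedSectionVars false
set_option linter.unusedVariables false
set_option maxHeartbeats 1000000

namespace WheelProof

variable {n : ℕ} [NeZero n]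

def rim (n : ℕ) [NeZero n] (k : ZMod n) : Fin (n + 1) :=
  ⟨k.val + 1, by have := ZMod.val_lt k; omega⟩

lemma rim_ne_zero (k : ZMod n) : rim n k ≠ 0 :=
  Fin.ne_of_val_ne (by simp [rim])

lemma rim_inj {k m : ZMod n} (h : rim n k = rim n m) : k = m := by
  have : k.val = m.val := by
    have := Fin.val_eq_of_eq h; simpa [rim] using this
  exact ZMod.val_injective n this

lemma cast_rim (k : ZMod n) : (((rim n k) : Fin (n+1)).val : ZMod n) = k + 1 := by
  have : ((rim n k) : Fin (n+1)).val = k.val + 1 := rfl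
  rw [this]
  push_cast
  simp [ZMod.natCast_val, ZMod.cast_id]

lemma vertex_cases (v : Fin (n+1)) : v = 0 ∨ ∃ k, v = rim n k := by
  rcases Nat.eq_zero_or_pos v.val with h | h
  · left; exact Fin.ext (by simpa using h)
  · right
    refine ⟨((v.val - 1 : ℕ) : ZMod n), ?_⟩
    have hv := v.isLt
    have hlt : v.val - 1 < n := by omega
    apply Fin.ext
    show v.val = ((v.val - 1 : ℕ) : ZMod n).val + 1
    rw [ZMod.val_natCast, Nat.mod_eq_of_lt hlt]
    omega

lemma two_ne_zero' (hn : 3 ≤ n) : (2 : ZMod n) ≠ 0 := by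
  have : ¬ ((2:ℕ) : ZMod n) = 0 := by
    rw [ZMod.natCast_eq_zero_iff]
    intro h; have := Nat.le_of_dvd (by norm_num) h; omega
  simpa using this

lemma one_ne_zero' (hn : 3 ≤ n) : (1 : ZMod n) ≠ 0 := by
  have : ¬ ((1:ℕ) : ZMod n) = 0 := by
    rw [ZMod.natCast_eq_zero_iff]
    intro h; have := Nat.le_of_dvd (by norm_num) h; omega
  simpa using this

lemma succ_ne_self (hn : 3 ≤ n) (k : ZMod n) : k + 1 ≠ k := by
  intro h
  exact one_ne_zero' hn (by linear_combination h)

lemma two_step_ne (hn : 3 ≤ n) (k : ZMod n) : k + 1 + 1 ≠ k := by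
  intro h
  exact two_ne_zero' hn (by linear_combination h)

lemma rim_succ_ne (hn : 3 ≤ n) (k : ZMod n) : rim n k ≠ rim n (k + 1) := by
  intro h
  exact succ_ne_self hn k (rim_inj h.symm)

lemma adj_iff (hn : 3 ≤ n) {a b : Fin (n+1)} :
    (wheelGraph n).Adj a b ↔
      ((a = 0 ∧ ∃ k, b = rim n k) ∨ (b = 0 ∧ ∃ k, a = rim n k) ∨
        (∃ k, a = rim n k ∧ b = rim n (k+1)) ∨ (∃ k, a = rim n (k+1) ∧ b = rim n k)) := by
  rw [wheelGraph, SimpleGraph.fromRel_adj]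
  constructor
  · rintro ⟨hne, hrel⟩
    rcases vertex_cases a with ha | ⟨k, ha⟩
    · subst ha
      rcases vertex_cases b with hb | ⟨m, hb⟩
      · exact absurd hb.symm hne
      · exact Or.inl ⟨rfl, m, hb⟩
    · rcases vertex_cases b with hb | ⟨m, hb⟩
      · subst hb; exact Or.inr (Or.inl ⟨rfl, k, ha⟩)
      · subst ha; subst hb
        rcases hrel with h | h
        · rcases h with h | h
          · exact absurd h (rim_ne_zero k)
          · rw [cast_rim, cast_rim] at h
            have : k = m + 1 := by linear_combination h
            exact Or.inr (Or.inr (Or.inr ⟨m, by rw [this], rfl⟩))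
        · rcases h with h | h
          · exact absurd h (rim_ne_zero m)
          · rw [cast_rim, cast_rim] at h
            have : m = k + 1 := by linear_combination h
            exact Or.inr (Or.inr (Or.inl ⟨k, rfl, by rw [this]⟩))
  · rintro (⟨ha, k, hb⟩ | ⟨hb, k, ha⟩ | ⟨k, ha, hb⟩ | ⟨k, ha, hb⟩)
    · subst ha; subst hb
      exact ⟨fun h => rim_ne_zero k h.symm, Or.inl (Or.inl rfl)⟩
    · subst ha; subst hb
      exact ⟨rim_ne_zero k, Or.inr (Or.inl rfl)⟩
    · subst ha; subst hb
      refine ⟨rim_succ_ne hn k, Or.inr (Or.inr ?_)⟩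
      rw [cast_rim, cast_rim]
    · subst ha; subst hb
      refine ⟨fun h => rim_succ_ne hn k h.symm, Or.inl (Or.inr ?_)⟩
      rw [cast_rim, cast_rim]


@[ext]
structure Cfg (n : ℕ) where
  u : ZMod n → Bool
  r : ZMod n → Bool

def Adm (n : ℕ) [NeZero n] : Set (Cfg n) :=
  {c | (∀ i, ¬(c.u i = true ∧ c.r i = true ∧ c.u (i+1) = false)) ∧
       (∀ i, ¬(c.u i = false ∧ c.r i = false ∧ c.u (i+1) = true)) ∧
       ¬(∀ i, c.r i = true) ∧ ¬(∀ i, c.r i = false)}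

def toO (c : Cfg n) : Fin (n+1) → Fin (n+1) → Prop := fun a b =>
  (a = 0 ∧ ∃ k, b = rim n k ∧ c.u k = true) ∨
  (b = 0 ∧ ∃ k, a = rim n k ∧ c.u k = false) ∨
  (∃ k, a = rim n k ∧ b = rim n (k+1) ∧ c.r k = true) ∨
  (∃ k, a = rim n (k+1) ∧ b = rim n k ∧ c.r k = false)

lemma toO_zero_rim {c : Cfg n} {k : ZMod n} : toO c 0 (rim n k) ↔ c.u k = true := by
  constructor
  · rintro (⟨-, m, hb, hu⟩ | ⟨h0, -⟩ | ⟨m, ha, -⟩ | ⟨m, ha, -⟩)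
    · rwa [rim_inj hb]
    · exact absurd h0 (rim_ne_zero k)
    · exact absurd ha.symm (rim_ne_zero m)
    · exact absurd ha.symm (rim_ne_zero (m+1))
  · exact fun h => Or.inl ⟨rfl, k, rfl, h⟩

lemma toO_rim_zero {c : Cfg n} {k : ZMod n} : toO c (rim n k) 0 ↔ c.u k = false := by
  constructor
  · rintro (⟨h0, -⟩ | ⟨-, m, ha, hu⟩ | ⟨m, -, hb, -⟩ | ⟨m, -, hb, -⟩)
    · exact absurd h0 (rim_ne_zero k)
    · rwa [rim_inj ha]
    · exact absurd hb.symm (rim_ne_zero (m+1))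
    · exact absurd hb.symm (rim_ne_zero m)
  · exact fun h => Or.inr (Or.inl ⟨rfl, k, rfl, h⟩)

lemma toO_rim_succ (hn : 3 ≤ n) {c : Cfg n} {k : ZMod n} :
    toO c (rim n k) (rim n (k+1)) ↔ c.r k = true := by
  constructor
  · rintro (⟨h0, -⟩ | ⟨h0, -⟩ | ⟨m, ha, hb, hr⟩ | ⟨m, ha, hb, hr⟩)
    · exact absurd h0 (rim_ne_zero k)
    · exact absurd h0 (rim_ne_zero (k+1))
    · have := rim_inj ha; subst this; rwa [rim_inj ha]
    · have h1 := rim_inj ha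
      have h2 := rim_inj hb
      exfalso
      apply two_step_ne hn m
      linear_combination h2 - h1
  · exact fun h => Or.inr (Or.inr (Or.inl ⟨k, rfl, rfl, h⟩))

lemma toO_succ_rim (hn : 3 ≤ n) {c : Cfg n} {k : ZMod n} :
    toO c (rim n (k+1)) (rim n k) ↔ c.r k = false := by
  constructor
  · rintro (⟨h0, -⟩ | ⟨h0, -⟩ | ⟨m, ha, hb, hr⟩ | ⟨m, ha, hb, hr⟩)
    · exact absurd h0 (rim_ne_zero (k+1))
    · exact absurd h0 (rim_ne_zero k)
    · have h1 := rim_inj ha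
      have h2 := rim_inj hb
      exfalso
      apply two_step_ne hn k
      linear_combination h1 - h2
    · have h1 := rim_inj hb; subst h1; rwa [rim_inj hb]
  · exact fun h => Or.inr (Or.inr (Or.inr ⟨k, rfl, rfl, h⟩))


lemma cast_val (x : ZMod n) : ((x.val : ℕ) : ZMod n) = x := by
  simp [ZMod.natCast_val, ZMod.cast_id]

lemma cyc_fwd (P : ZMod n → Prop) (h : ∀ i, P i → P (i+1)) {j : ZMod n} (hj : P j)
    (k : ZMod n) : P k := by
  have key : ∀ t : ℕ, P (j + t) := by
    intro t
    induction t with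
    | zero => simpa using hj
    | succ t ih =>
        have := h _ ih
        rwa [Nat.cast_succ, ← add_assoc]
  have := key (k - j).val
  rwa [cast_val, add_sub_cancel] at this

lemma cyc_bwd (P : ZMod n → Prop) (h : ∀ i, P (i+1) → P i) {j : ZMod n} (hj : P j)
    (k : ZMod n) : P k := by
  have := cyc_fwd (fun i => P (-i)) (fun i hi => by
    apply h (-(i+1))
    have : -(i + 1) + 1 = -i := by ring
    rwa [this]) (j := -j) (by simpa using hj) (-k)
  simpa using this

lemma val_neg_one (hn : 3 ≤ n) : ((-1 : ZMod n)).val = n - 1 := by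
  have h1 : ((n - 1 : ℕ) : ZMod n) = -1 := by
    have : ((n : ℕ) : ZMod n) = 0 := ZMod.natCast_self n
    push_cast [Nat.cast_sub (by omega : 1 ≤ n)]
    rw [this]; ring
  rw [← h1, ZMod.val_natCast, Nat.mod_eq_of_lt (by omega)]

lemma val_add_one (hn : 3 ≤ n) {x : ZMod n} (h : x ≠ -1) : (x + 1).val = x.val + 1 := by
  have hlt : x.val < n := ZMod.val_lt x
  have hne : x.val ≠ n - 1 := by
    intro hv
    apply h
    rw [← cast_val x, hv]
    have : ((n - 1 : ℕ) : ZMod n) = -1 := by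
      have h0 : ((n : ℕ) : ZMod n) = 0 := ZMod.natCast_self n
      push_cast [Nat.cast_sub (by omega : 1 ≤ n)]
      rw [h0]; ring
    exact this
  have : x + 1 = ((x.val + 1 : ℕ) : ZMod n) := by rw [Nat.cast_add, cast_val]; norm_num
  rw [this, ZMod.val_natCast, Nat.mod_eq_of_lt (by omega)]

section Potential

variable (r : ZMod n → Bool)

def sg (i : ZMod n) : ℤ := if r i then 1 else -1

def gg (b : ZMod n) (t : ℕ) : ℤ := ∑ x ∈ Finset.range t, sg r (b + x)

def ff (b : ZMod n) (i : ZMod n) : ℤ := gg r b (i - b).val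

lemma abs_sg (i : ZMod n) : |sg r i| ≤ 1 := by
  unfold sg; split <;> simp

lemma abs_gg (b : ZMod n) (t : ℕ) : |gg r b t| ≤ t := by
  induction t with
  | zero => simp [gg]
  | succ t ih =>
      have : gg r b (t+1) = gg r b t + sg r (b + t) := Finset.sum_range_succ _ _
      rw [this]
      calc |gg r b t + sg r (b+t)| ≤ |gg r b t| + |sg r (b+t)| := abs_add_le _ _
        _ ≤ (t : ℤ) + 1 := add_le_add ih (abs_sg r _)
        _ = ((t+1 : ℕ) : ℤ) := by push_cast; ring

lemma abs_ff (b : ZMod n) (i : ZMod n) : |ff r b i| ≤ n := by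
  have h := abs_gg r b (i - b).val
  have := ZMod.val_lt (i - b)
  unfold ff
  omega

lemma ff_self (b : ZMod n) : ff r b b = 0 := by
  unfold ff
  simp [gg]

lemma ff_step (hn : 3 ≤ n) (b : ZMod n) {j : ZMod n} (h : j + 1 ≠ b) :
    ff r b (j + 1) = ff r b j + sg r j := by
  have hne : j - b ≠ -1 := by
    intro hx
    apply h
    have : j = b - 1 := by linear_combination hx
    rw [this]; ring
  have hval : (j + 1 - b).val = (j - b).val + 1 := by
    have : j + 1 - b = (j - b) + 1 := by ring
    rw [this, val_add_one hn hne]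
  unfold ff
  rw [hval]
  have : gg r b ((j-b).val + 1) = gg r b (j-b).val + sg r (b + (j-b).val) :=
    Finset.sum_range_succ _ _
  rw [this, cast_val, add_sub_cancel]

lemma gg_total (hn : 3 ≤ n) (b : ZMod n) : gg r b n = ∑ i : ZMod n, sg r i := by
  unfold gg
  rw [← Fin.sum_univ_eq_sum_range (fun x => sg r (b + (x : ℕ)))]
  apply Fintype.sum_bijective (fun x : Fin n => b + ((x : ℕ) : ZMod n))
  · constructor
    · intro x y hxy
      have : ((x : ℕ) : ZMod n) = ((y : ℕ) : ZMod n) := by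
        have := hxy; simpa using this
      have := congrArg ZMod.val this
      rw [ZMod.val_natCast, ZMod.val_natCast, Nat.mod_eq_of_lt x.isLt,
        Nat.mod_eq_of_lt y.isLt] at this
      exact Fin.ext this
    · intro y
      refine ⟨⟨(y - b).val, ZMod.val_lt _⟩, ?_⟩
      simp [cast_val]
  · intro x
    rfl

lemma ff_last (hn : 3 ≤ n) (b : ZMod n) :
    ff r b (b - 1) = (∑ i : ZMod n, sg r i) - sg r (b - 1) := by
  have hval : (b - 1 - b).val = n - 1 := by
    have : b - 1 - b = -1 := by ring
    rw [this, val_neg_one hn]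
  unfold ff
  rw [hval]
  have hsucc : gg r b ((n-1) + 1) = gg r b (n-1) + sg r (b + ((n-1 : ℕ) : ZMod n)) :=
    Finset.sum_range_succ _ _
  have hn1 : (n - 1) + 1 = n := by omega
  rw [hn1] at hsucc
  have hcast : b + ((n - 1 : ℕ) : ZMod n) = b - 1 := by
    have h1 : ((n - 1 : ℕ) : ZMod n) = -1 := by
      have h0 : ((n : ℕ) : ZMod n) = 0 := ZMod.natCast_self n
      push_cast [Nat.cast_sub (by omega : 1 ≤ n)]
      rw [h0]; ring
    rw [h1]; ring
  rw [hcast] at hsucc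
  rw [← gg_total r hn b]
  omega

lemma exists_potential (hn : 3 ≤ n) (hT : ∃ i, r i = true) (hF : ∃ i, r i = false) :
    ∃ f : ZMod n → ℤ, (∀ i, |f i| ≤ n) ∧
      (∀ j, (r j = true → f j < f (j+1)) ∧ (r j = false → f (j+1) < f j)) := by
  by_cases hc : (∑ i : ZMod n, sg r i) ≤ 0
  · obtain ⟨i, hi⟩ := hT
    refine ⟨ff r (i + 1), fun j => abs_ff r _ j, fun j => ?_⟩
    by_cases hj : j + 1 = i + 1
    · have hji : i = j := by linear_combination - hj
      subst hji
      refine ⟨fun _ => ?_, fun hf => (by rw [hi] at hf; cases hf)⟩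
      rw [hj, ff_self]
      have h1 : i + 1 - 1 = i := by ring
      have h2 := ff_last r hn (i + 1)
      rw [h1] at h2
      have h3 : sg r i = 1 := by simp [sg, hi]
      rw [h2, h3]
      omega
    · refine ⟨fun h => ?_, fun h => ?_⟩
      · rw [ff_step r hn _ hj]; simp [sg, h]
      · rw [ff_step r hn _ hj]; simp [sg, h]
  · obtain ⟨i, hi⟩ := hF
    refine ⟨ff r (i + 1), fun j => abs_ff r _ j, fun j => ?_⟩
    by_cases hj : j + 1 = i + 1
    · have hji : i = j := by linear_combination - hj
      subst hji
      refine ⟨fun hf => (by rw [hi] at hf; cases hf), fun _ => ?_⟩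
      rw [hj, ff_self]
      have h1 : i + 1 - 1 = i := by ring
      have h2 := ff_last r hn (i + 1)
      rw [h1] at h2
      have h3 : sg r i = -1 := by simp [sg, hi]
      rw [h2, h3]
      omega
    · refine ⟨fun h => ?_, fun h => ?_⟩
      · rw [ff_step r hn _ hj]; simp [sg, h]
      · rw [ff_step r hn _ hj]; simp [sg, h]

end Potential


def unrim (n : ℕ) [NeZero n] (v : Fin (n+1)) : ZMod n := ((v.val - 1 : ℕ) : ZMod n)

lemma unrim_rim (k : ZMod n) : unrim n (rim n k) = k := by
  unfold unrim rim
  simp [cast_val]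

def Ff (c : Cfg n) (f : ZMod n → ℤ) (v : Fin (n+1)) : ℤ :=
  if v = 0 then 0 else f (unrim n v) + (if c.u (unrim n v) then (n+1 : ℤ) else -(n+1))

lemma Ff_zero (c : Cfg n) (f : ZMod n → ℤ) : Ff c f 0 = 0 := by simp [Ff]

lemma Ff_rim (c : Cfg n) (f : ZMod n → ℤ) (k : ZMod n) :
    Ff c f (rim n k) = f k + (if c.u k then (n+1 : ℤ) else -(n+1)) := by
  rw [Ff, if_neg (rim_ne_zero k), unrim_rim]

lemma toO_lt {c : Cfg n} (hc : c ∈ Adm n) (hn : 3 ≤ n) :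
    ∃ F : Fin (n+1) → ℤ, ∀ a b, toO c a b → F a < F b := by
  obtain ⟨tri1, tri2, hT, hF⟩ := hc
  push_neg at hT hF
  obtain ⟨iF, hiF⟩ := hF
  obtain ⟨iT, hiT⟩ := hT
  simp only [ne_eq, Bool.not_eq_false] at hiF
  simp only [ne_eq, Bool.not_eq_true] at hiT
  obtain ⟨f, hfb, hford⟩ := exists_potential c.r hn ⟨iF, hiF⟩ ⟨iT, hiT⟩
  refine ⟨Ff c f, fun a b hab => ?_⟩
  rcases hab with ⟨ha, k, hb, hu⟩ | ⟨hb, k, ha, hu⟩ | ⟨k, ha, hb, hr⟩ | ⟨k, ha, hb, hr⟩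
  · subst ha; subst hb
    rw [Ff_zero, Ff_rim, hu, if_pos rfl]
    have := abs_le.mp (hfb k)
    omega
  · subst ha; subst hb
    rw [Ff_zero, Ff_rim, hu]
    simp only [Bool.false_eq_true, if_false]
    have := abs_le.mp (hfb k)
    omega
  · subst ha; subst hb
    rw [Ff_rim, Ff_rim]
    have hlt : f k < f (k+1) := (hford k).1 hr
    have hfk := abs_le.mp (hfb k)
    have hfk1 := abs_le.mp (hfb (k+1))
    have hnf : ¬ (c.u k = true ∧ c.u (k+1) = false) := by
      intro ⟨h1, h2⟩; exact tri1 k ⟨h1, hr, h2⟩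
    rcases Bool.eq_false_or_eq_true (c.u k) with h1 | h1 <;>
      rcases Bool.eq_false_or_eq_true (c.u (k+1)) with h2 | h2 <;>
      simp only [h1, h2, if_pos, if_neg, Bool.false_eq_true, if_true, if_false] <;>
      first
        | omega
        | (exact absurd ⟨h1, h2⟩ hnf)
  · subst ha; subst hb
    rw [Ff_rim, Ff_rim]
    have hlt : f (k+1) < f k := (hford k).2 hr
    have hfk := abs_le.mp (hfb k)
    have hfk1 := abs_le.mp (hfb (k+1))
    have hnf : ¬ (c.u k = false ∧ c.u (k+1) = true) := by
      intro ⟨h1, h2⟩; exact tri2 k ⟨h1, hr, h2⟩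
    rcases Bool.eq_false_or_eq_true (c.u k) with h1 | h1 <;>
      rcases Bool.eq_false_or_eq_true (c.u (k+1)) with h2 | h2 <;>
      simp only [h1, h2, if_pos, if_neg, Bool.false_eq_true, if_true, if_false] <;>
      first
        | omega
        | (exact absurd ⟨h1, h2⟩ hnf)

lemma toO_acyclic {c : Cfg n} (hc : c ∈ Adm n) (hn : 3 ≤ n) (a : Fin (n+1)) :
    ¬ Relation.TransGen (toO c) a a := by
  obtain ⟨F, hF⟩ := toO_lt hc hn
  intro h
  have key : ∀ x y : Fin (n+1), Relation.TransGen (toO c) x y → F x < F y := by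
    intro x y hxy
    induction hxy with
    | single h => exact hF _ _ h
    | tail _ h ih => exact lt_trans ih (hF _ _ h)
  exact absurd (key a a h) (lt_irrefl _)


lemma toO_adj (hn : 3 ≤ n) {c : Cfg n} {a b : Fin (n+1)} (h : toO c a b) :
    (wheelGraph n).Adj a b := by
  rw [adj_iff hn]
  rcases h with ⟨ha, k, hb, -⟩ | ⟨hb, k, ha, -⟩ | ⟨k, ha, hb, -⟩ | ⟨k, ha, hb, -⟩
  · exact Or.inl ⟨ha, k, hb⟩
  · exact Or.inr (Or.inl ⟨hb, k, ha⟩)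
  · exact Or.inr (Or.inr (Or.inl ⟨k, ha, hb⟩))
  · exact Or.inr (Or.inr (Or.inr ⟨k, ha, hb⟩))

lemma toO_mem (hn : 3 ≤ n) {c : Cfg n} (hc : c ∈ Adm n) :
    toO c ∈ acyclicOrientationSet (wheelGraph n) := by
  refine ⟨fun a b => toO_adj hn, fun a b hab => ?_, toO_acyclic hc hn⟩
  rw [adj_iff hn] at hab
  rcases hab with ⟨ha, k, hb⟩ | ⟨hb, k, ha⟩ | ⟨k, ha, hb⟩ | ⟨k, ha, hb⟩
  · subst ha; subst hb
    rw [toO_zero_rim, toO_rim_zero]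
    simp
  · subst ha; subst hb
    rw [toO_zero_rim, toO_rim_zero]
    simp
  · subst ha; subst hb
    rw [toO_rim_succ hn, toO_succ_rim hn]
    simp
  · subst ha; subst hb
    rw [toO_rim_succ hn, toO_succ_rim hn]
    simp

lemma toO_injOn (hn : 3 ≤ n) : Set.InjOn (toO (n := n)) (Adm n) := by
  intro c hc c' hc' h
  ext k
  · have h1 := toO_zero_rim (c := c) (k := k)
    have h2 := toO_zero_rim (c := c') (k := k)
    rw [h] at h1
    rw [h1] at h2
    cases hb : c.u k <;> cases hb' : c'.u k <;> simp_all
  · have h1 := toO_rim_succ hn (c := c) (k := k)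
    have h2 := toO_rim_succ hn (c := c') (k := k)
    rw [h] at h1
    rw [h1] at h2
    cases hb : c.r k <;> cases hb' : c'.r k <;> simp_all

lemma rim_cycle_fwd {o : Fin (n+1) → Fin (n+1) → Prop}
    (h : ∀ k : ZMod n, o (rim n k) (rim n (k+1))) :
    Relation.TransGen o (rim n 0) (rim n 0) := by
  have key : ∀ t : ℕ, Relation.TransGen o (rim n 0) (rim n ((t : ZMod n) + 1)) := by
    intro t
    induction t with
    | zero => exact Relation.TransGen.single (by simpa using h 0)
    | succ t ih =>
        have step := h ((t : ZMod n) + 1)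
        have : ((t+1 : ℕ) : ZMod n) + 1 = ((t : ZMod n) + 1) + 1 := by push_cast; ring
        rw [this]
        exact Relation.TransGen.tail ih step
  have := key (n - 1)
  have hcast : (((n-1 : ℕ) : ZMod n) + 1) = 0 := by
    have h1 : ((n - 1 : ℕ) : ZMod n) = -1 := by
      have h0 : ((n : ℕ) : ZMod n) = 0 := ZMod.natCast_self n
      have hn1 : 1 ≤ n := Nat.one_le_iff_ne_zero.mpr (NeZero.ne n)
      push_cast [Nat.cast_sub hn1]
      rw [h0]; ring
    rw [h1]; ring
  rwa [hcast] at this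

lemma rim_cycle_bwd {o : Fin (n+1) → Fin (n+1) → Prop}
    (h : ∀ k : ZMod n, o (rim n (k+1)) (rim n k)) :
    Relation.TransGen o (rim n 0) (rim n 0) := by
  have key : ∀ t : ℕ, Relation.TransGen o (rim n ((t : ZMod n) + 1)) (rim n 0) := by
    intro t
    induction t with
    | zero => exact Relation.TransGen.single (by simpa using h 0)
    | succ t ih =>
        have step := h ((t : ZMod n) + 1)
        have hc : ((t+1 : ℕ) : ZMod n) + 1 = ((t : ZMod n) + 1) + 1 := by push_cast; ring
        rw [hc]
        exact Relation.TransGen.head step ih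
  have := key (n - 1)
  have hcast : (((n-1 : ℕ) : ZMod n) + 1) = 0 := by
    have h1 : ((n - 1 : ℕ) : ZMod n) = -1 := by
      have h0 : ((n : ℕ) : ZMod n) = 0 := ZMod.natCast_self n
      have hn1 : 1 ≤ n := Nat.one_le_iff_ne_zero.mpr (NeZero.ne n)
      push_cast [Nat.cast_sub hn1]
      rw [h0]; ring
    rw [h1]; ring
  rwa [hcast] at this

lemma toO_surjOn (hn : 3 ≤ n) {o : Fin (n+1) → Fin (n+1) → Prop}
    (ho : o ∈ acyclicOrientationSet (wheelGraph n)) :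
    ∃ c ∈ Adm n, toO c = o := by
  classical
  obtain ⟨ax1, ax2, ax3⟩ := ho
  set c : Cfg n := ⟨fun k => decide (o 0 (rim n k)), fun k => decide (o (rim n k) (rim n (k+1)))⟩
    with hcdef
  have hu : ∀ k, c.u k = true ↔ o 0 (rim n k) := by intro k; simp [hcdef]
  have hr : ∀ k, c.r k = true ↔ o (rim n k) (rim n (k+1)) := by intro k; simp [hcdef]
  have hu' : ∀ k, c.u k = false ↔ o (rim n k) 0 := by
    intro k
    rw [← Bool.not_eq_true, hu]
    rw [ax2 (rim n k) 0 ((adj_iff hn).mpr (Or.inr (Or.inl ⟨rfl, k, rfl⟩)))]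
  have hr' : ∀ k, c.r k = false ↔ o (rim n (k+1)) (rim n k) := by
    intro k
    rw [← Bool.not_eq_true, hr]
    rw [ax2 (rim n (k+1)) (rim n k) ((adj_iff hn).mpr (Or.inr (Or.inr (Or.inr ⟨k, rfl, rfl⟩))))]
  have hco : toO c = o := by
    funext a b
    apply propext
    constructor
    · rintro (⟨ha, k, hb, hk⟩ | ⟨hb, k, ha, hk⟩ | ⟨k, ha, hb, hk⟩ | ⟨k, ha, hb, hk⟩)
      · subst ha; subst hb; exact (hu k).mp hk
      · subst ha; subst hb; exact (hu' k).mp hk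
      · subst ha; subst hb; exact (hr k).mp hk
      · subst ha; subst hb; exact (hr' k).mp hk
    · intro hab
      have hadj := ax1 a b hab
      rw [adj_iff hn] at hadj
      rcases hadj with ⟨ha, k, hb⟩ | ⟨hb, k, ha⟩ | ⟨k, ha, hb⟩ | ⟨k, ha, hb⟩
      · subst ha; subst hb; exact Or.inl ⟨rfl, k, rfl, (hu k).mpr hab⟩
      · subst ha; subst hb; exact Or.inr (Or.inl ⟨rfl, k, rfl, (hu' k).mpr hab⟩)
      · subst ha; subst hb; exact Or.inr (Or.inr (Or.inl ⟨k, rfl, rfl, (hr k).mpr hab⟩))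
      · subst ha; subst hb; exact Or.inr (Or.inr (Or.inr ⟨k, rfl, rfl, (hr' k).mpr hab⟩))
  refine ⟨c, ⟨?_, ?_, ?_, ?_⟩, hco⟩
  · rintro k ⟨h1, h2, h3⟩
    apply ax3 0
    exact Relation.TransGen.tail
      (Relation.TransGen.tail (Relation.TransGen.single ((hu k).mp h1)) ((hr k).mp h2))
      (by
        rw [← Bool.not_eq_true] at h3
        rw [hu] at h3
        exact (ax2 (rim n (k+1)) 0
          ((adj_iff hn).mpr (Or.inr (Or.inl ⟨rfl, k+1, rfl⟩)))).mpr h3)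
  · rintro k ⟨h1, h2, h3⟩
    apply ax3 0
    exact Relation.TransGen.tail
      (Relation.TransGen.tail (Relation.TransGen.single ((hu (k+1)).mp h3)) ((hr' k).mp h2))
      ((hu' k).mp h1)
  · intro hall
    apply ax3 (rim n 0)
    exact rim_cycle_fwd (fun k => (hr k).mp (hall k))
  · intro hall
    apply ax3 (rim n 0)
    exact rim_cycle_bwd (fun k => (hr' k).mp (hall k))


def wrd (c : Cfg n) : ZMod n → Fin 3 := fun i =>
  if c.r i then (if c.u (i+1) then 0 else 1) else (if c.u (i+1) then 1 else 2)

def NC (n : ℕ) [NeZero n] : Set (ZMod n → Fin 3) := {w | ∀ x : Fin 3, w ≠ fun _ => x}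

def stp (w : Fin 3) (x : Bool) : Bool := if w = 0 then true else if w = 2 then false else x

def rstp (w : Fin 3) (x : Bool) : Bool := if w = 0 then true else if w = 2 then false else !x

lemma fin3_cases (x : Fin 3) : x = 0 ∨ x = 1 ∨ x = 2 := by fin_cases x <;> simp

lemma u_step {c : Cfg n} (hc : c ∈ Adm n) (i : ZMod n) :
    c.u (i+1) = stp (wrd c i) (c.u i) := by
  obtain ⟨tri1, tri2, -, -⟩ := hc
  have t1 := tri1 i
  have t2 := tri2 i
  cases hr : c.r i <;> cases h1 : c.u (i+1) <;> cases h0 : c.u i <;>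
    simp_all [wrd, stp]

lemma r_step {c : Cfg n} (hc : c ∈ Adm n) (i : ZMod n) :
    c.r i = rstp (wrd c i) (c.u i) := by
  obtain ⟨tri1, tri2, -, -⟩ := hc
  have t1 := tri1 i
  have t2 := tri2 i
  cases hr : c.r i <;> cases h1 : c.u (i+1) <;> cases h0 : c.u i <;>
    simp_all [wrd, rstp]

lemma wrd_mapsTo (hn : 3 ≤ n) : Set.MapsTo (wrd (n := n)) (Adm n) (NC n) := by
  intro c hc x hx
  have hcA := hc
  obtain ⟨tri1, tri2, hT, hF⟩ := hc
  have hwx : ∀ i, wrd c i = x := fun i => congrFun hx i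
  rcases fin3_cases x with rfl | rfl | rfl
  · apply hT
    intro i
    have := hwx i
    cases hr : c.r i <;> cases h1 : c.u (i+1) <;> simp_all [wrd]
  · have hustep : ∀ i, c.u (i+1) = c.u i := by
      intro i
      have h := u_step hcA i
      rw [hwx i] at h
      simpa [stp] using h
    have huconst : ∀ k, c.u k = c.u 0 :=
      cyc_fwd (fun k => c.u k = c.u 0)
        (fun i hi => by show c.u (i+1) = c.u 0; rw [hustep i]; exact hi) rfl
    have hrconst : ∀ i, c.r i = !(c.u 0) := by
      intro i
      have h := r_step hcA i
      rw [hwx i] at h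
      norm_num [rstp] at h
      rw [h, huconst i]
      simp
    cases h0 : c.u 0
    · exact hT (fun i => by rw [hrconst i, h0]; rfl)
    · exact hF (fun i => by rw [hrconst i, h0]; rfl)
  · apply hF
    intro i
    have := hwx i
    cases hr : c.r i <;> cases h1 : c.u (i+1) <;> simp_all [wrd]

lemma wrd_injOn (hn : 3 ≤ n) : Set.InjOn (wrd (n := n)) (Adm n) := by
  intro c hc c' hc' h
  have hne : ∃ p, wrd c p ≠ 1 := by
    by_contra hcon
    push_neg at hcon
    exact wrd_mapsTo hn hc 1 (funext hcon)
  obtain ⟨p, hp⟩ := hne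
  have hu : ∀ k, c.u k = c'.u k := by
    apply cyc_fwd (fun k => c.u k = c'.u k)
    · intro i hi
      rw [u_step hc i, u_step hc' i, h, hi]
    · show c.u (p + 1) = c'.u (p + 1)
      rw [u_step hc p, u_step hc' p, h]
      rcases fin3_cases (wrd c' p) with h0 | h0 | h0
      · rw [h0]; rfl
      · rw [← h] at h0; exact absurd h0 hp
      · rw [h0]; rfl
  ext k
  · exact hu k
  · rw [r_step hc k, r_step hc' k, h, hu k]

lemma wrd_surjOn (hn : 3 ≤ n) : Set.SurjOn (wrd (n := n)) (Adm n) (NC n) := by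
  intro w hw
  have hp : ∃ p, w p ≠ 1 := by
    by_contra hcon
    push_neg at hcon
    exact hw 1 (funext hcon)
  obtain ⟨p, hp⟩ := hp
  classical
  set v : ℕ → Bool := fun t => Nat.rec (decide (w p = 0)) (fun t vt => stp (w (p+1+t)) vt) t
    with hv
  set u : ZMod n → Bool := fun k => v ((k - (p+1)).val) with hudef
  set c : Cfg n := ⟨u, fun i => rstp (w i) (u i)⟩ with hcdef
  have key : ∀ i, u (i+1) = stp (w i) (u i) := by
    intro i
    by_cases hip : i = p
    · subst hip
      have h0 : u (i+1) = v 0 := by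
        rw [hudef]
        simp
      rw [h0]
      rcases fin3_cases (w i) with hw0 | hw0 | hw0
      · rw [hv]; simp [stp, hw0]
      · exact absurd hw0 hp
      · rw [hv]; simp [stp, hw0]
    · have hne : i - (p+1) ≠ -1 := by
        intro hx
        apply hip
        linear_combination hx
      have hval : (i + 1 - (p+1)).val = (i - (p+1)).val + 1 := by
        have he : i + 1 - (p+1) = (i - (p+1)) + 1 := by ring
        rw [he, val_add_one hn hne]
      have hcast : p + 1 + (((i - (p+1)).val : ℕ) : ZMod n) = i := by
        rw [cast_val]; ring
      show v ((i + 1 - (p+1)).val) = stp (w i) (v ((i - (p+1)).val))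
      rw [hval]
      show stp (w (p+1+((i - (p+1)).val : ℕ))) (v ((i - (p+1)).val)) = _
      rw [hcast]
  have tri1 : ∀ i, ¬(c.u i = true ∧ c.r i = true ∧ c.u (i+1) = false) := by
    rintro i ⟨h1, h2, h3⟩
    have hk := key i
    rcases fin3_cases (w i) with hw0 | hw0 | hw0 <;>
      simp_all [stp, rstp, hcdef]
  have tri2 : ∀ i, ¬(c.u i = false ∧ c.r i = false ∧ c.u (i+1) = true) := by
    rintro i ⟨h1, h2, h3⟩
    have hk := key i
    rcases fin3_cases (w i) with hw0 | hw0 | hw0 <;>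
      simp_all [stp, rstp, hcdef]
  have hwrd : wrd c = w := by
    funext i
    have hk := key i
    rcases fin3_cases (w i) with hw0 | hw0 | hw0 <;>
      rw [hw0] <;>
      cases h0 : u i <;>
      simp_all [wrd, stp, rstp, hcdef]
  refine ⟨c, ⟨tri1, tri2, ?_, ?_⟩, hwrd⟩
  · intro hall
    have himp : ∀ i, u i = true → u (i+1) = true := by
      intro i hi
      have hk := key i
      have hr := hall i
      rcases fin3_cases (w i) with hw0 | hw0 | hw0 <;>
        simp_all [stp, rstp, hcdef]
    by_cases he : ∃ i, u i = true
    · obtain ⟨i, hi⟩ := he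
      have hall2 : ∀ k, u k = true := cyc_fwd (fun k => u k = true) himp hi
      apply hw 0
      rw [← hwrd]
      funext i
      have := hall i
      simp_all [wrd, hcdef, hall2]
    · push_neg at he
      apply hw 1
      rw [← hwrd]
      funext i
      have h1 := hall i
      have h2 : u (i+1) = false := by simpa using he (i+1)
      simp_all [wrd, hcdef]
  · intro hall
    have himp : ∀ i, u (i+1) = true → u i = true := by
      intro i hi
      have hk := key i
      have hr := hall i
      rcases fin3_cases (w i) with hw0 | hw0 | hw0 <;>
        simp_all [stp, rstp, hcdef]
    by_cases he : ∃ i, u i = true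
    · obtain ⟨i, hi⟩ := he
      have hall2 : ∀ k, u k = true := cyc_bwd (fun k => u k = true) himp hi
      apply hw 1
      rw [← hwrd]
      funext i
      have := hall i
      simp_all [wrd, hcdef, hall2]
    · push_neg at he
      apply hw 2
      rw [← hwrd]
      funext i
      have h1 := hall i
      have h2 : u (i+1) = false := by simpa using he (i+1)
      simp_all [wrd, hcdef]


lemma ncard_NC (hn : 3 ≤ n) : (NC n).ncard = 3 ^ n - 3 := by
  classical
  have hcompl : (NC n)ᶜ = Set.range (fun x : Fin 3 => (fun _ : ZMod n => x)) := by
    ext w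
    constructor
    · intro hwc
      simp only [NC, Set.mem_compl_iff, Set.mem_setOf_eq] at hwc
      push_neg at hwc
      obtain ⟨x, hx⟩ := hwc
      exact ⟨x, hx.symm⟩
    · rintro ⟨x, rfl⟩
      intro hcon
      exact hcon x rfl
  have h1 : (NC n).ncard + ((NC n)ᶜ).ncard = Nat.card (ZMod n → Fin 3) :=
    Set.ncard_add_ncard_compl _
  have h2 : ((NC n)ᶜ).ncard = 3 := by
    rw [hcompl, ← Nat.card_coe_set_eq,
      Nat.card_range_of_injective (f := fun x : Fin 3 => (fun _ : ZMod n => x))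
        (fun a b h => congrFun h 0)]
    simp
  have h3 : Nat.card (ZMod n → Fin 3) = 3 ^ n := by
    rw [Nat.card_eq_fintype_card, Fintype.card_fun]
    simp [ZMod.card]
  omega

lemma main_count (hn : 3 ≤ n) :
    (acyclicOrientationSet (wheelGraph n)).ncard = 3 ^ n - 3 := by
  have himg : toO '' (Adm n) = acyclicOrientationSet (wheelGraph n) := by
    apply subset_antisymm
    · rintro o ⟨c, hc, rfl⟩
      exact toO_mem hn hc
    · intro o ho
      obtain ⟨c, hc, hco⟩ := toO_surjOn hn ho
      exact ⟨c, hc, hco⟩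
  have himg2 : wrd '' (Adm n) = NC n :=
    subset_antisymm ((wrd_mapsTo hn).image_subset) (wrd_surjOn hn)
  rw [← himg, Set.ncard_image_of_injOn (toO_injOn hn)]
  rw [← Set.ncard_image_of_injOn (wrd_injOn hn), himg2]
  exact ncard_NC hn

end WheelProof

/-- For `n ≥ 3`, the number of acyclic orientations of the wheel graph `W_n` equals
`3^n − 3`. -/
theorem card_acyclicOrientations_wheelGraph (n : ℕ) (hn : 3 ≤ n) :
    (acyclicOrientationSet (wheelGraph n)).ncard = 3 ^ n - 3 := by
  haveI : NeZero n := ⟨by omega⟩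
  exact WheelProof.main_count hn
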